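/- arXiv:2410.09446 — 5 statements merged into one kernel-verified Lean document; each statement's English description precedes it below -/
import Mathlib

section
/- Let T and S be bounded, linear, positive operators on L²(G, ℂ^{s×r}), each adjointable with respect to the matrix-valued inner product, such that T S = S T, and let {E_k}_{k∈ℕ} be a matrix-valued orthonormal basis for L²(G, ℂ^{s×r}). Then {(I + T S) E_k}_{k∈ℕ} is a matrix-valued Riesz basis for L²(G, ℂ^{s×r}), where I denotes the identity operator. -/
open MeasureTheory Filter
open scoped ENNReal ComplexOrder

noncomputable section

/-- The space `L²(G, ℂ^{s×r})` of square-integrable `ℂ^{s×r}`-valued functions on `G`,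
realized as an `Lp`-space with values in `EuclideanSpace ℂ (Fin s × Fin r)`
(so that the norm is the Frobenius norm). -/
abbrev MatL2 {G : Type*} [MeasurableSpace G] (μ : Measure G) (s r : ℕ) : Type _ :=
  Lp (α := G) (EuclideanSpace ℂ (Fin s × Fin r)) 2 μ

/-- The matrix-valued inner product `⟨f, g⟩ = ∫_G f(x) g(x)* dμ(x)`, an `s × s` matrix. -/
def matInner {G : Type*} [MeasurableSpace G] {μ : Measure G} {s r : ℕ}
    (f g : MatL2 μ s r) : Matrix (Fin s) (Fin s) ℂ :=
  Matrix.of fun i j => ∫ x, ∑ n : Fin r, f x (i, n) * (starRingEnd ℂ) (g x (j, n)) ∂μ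

/-- Left multiplication by the matrix `A : ℂ^{s×s}` as a continuous linear map on
`ℂ^{s×r} ≅ EuclideanSpace ℂ (Fin s × Fin r)`; it is given by the matrix `A ⊗ I`. -/
def matMulCLM (s r : ℕ) (A : Matrix (Fin s) (Fin s) ℂ) :
    EuclideanSpace ℂ (Fin s × Fin r) →L[ℂ] EuclideanSpace ℂ (Fin s × Fin r) :=
  LinearMap.toContinuousLinearMap
    (Matrix.toEuclideanLin (Matrix.of fun p q : Fin s × Fin r =>
      if p.2 = q.2 then A p.1 q.1 else 0))

/-- The action of a matrix `A : ℂ^{s×s}` on `h ∈ L²(G, ℂ^{s×r})` by pointwise left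
multiplication, `(A h)(x) = A · h(x)`. -/
def matSMul {G : Type*} [MeasurableSpace G] {μ : Measure G} {s r : ℕ}
    (A : Matrix (Fin s) (Fin s) ℂ) (f : MatL2 μ s r) : MatL2 μ s r :=
  (matMulCLM s r A).compLp f

/-- A bounded linear operator `U` on `L²(G, ℂ^{s×r})` is adjointable with respect to the
matrix-valued inner product if `⟨U f, g⟩ = ⟨f, U* g⟩` (as `s × s` matrices) for all `f, g`,
where `U*` is the Hilbert adjoint of `U`. -/
def MatAdjointable {G : Type*} [MeasurableSpace G] {μ : Measure G} {s r : ℕ}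
    (U : MatL2 μ s r →L[ℂ] MatL2 μ s r) : Prop :=
  ∀ f g : MatL2 μ s r,
    matInner (U f) g = matInner f (ContinuousLinearMap.adjoint U g)

/-- A matrix-valued orthonormal basis of `L²(G, ℂ^{s×r})`: `⟨E k, E j⟩ = δ_{kj} I` and
every `f` has the expansion `f = ∑_k ⟨f, E k⟩ E k`, the series converging in norm. -/
def IsMatONB {G : Type*} [MeasurableSpace G] {μ : Measure G} {s r : ℕ}
    (E : ℕ → MatL2 μ s r) : Prop :=
  (∀ k j : ℕ, matInner (E k) (E j) =
      if k = j then (1 : Matrix (Fin s) (Fin s) ℂ) else (0 : Matrix (Fin s) (Fin s) ℂ)) ∧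
  (∀ f : MatL2 μ s r,
    Tendsto (fun N : ℕ => ∑ k ∈ Finset.range N, matSMul (matInner f (E k)) (E k))
      atTop (nhds f))

/-- A matrix-valued Riesz basis of `L²(G, ℂ^{s×r})`: the image of a matrix-valued
orthonormal basis under a bounded, linear, bijective operator that is adjointable with
respect to the matrix-valued inner product. -/
def IsMatRieszBasis {G : Type*} [MeasurableSpace G] {μ : Measure G} {s r : ℕ}
    (F : ℕ → MatL2 μ s r) : Prop :=
  ∃ (E : ℕ → MatL2 μ s r) (V : MatL2 μ s r →L[ℂ] MatL2 μ s r),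
    IsMatONB E ∧ Function.Bijective V ∧ MatAdjointable V ∧ ∀ k : ℕ, F k = V (E k)

/-- The Frobenius norm of an `s × s` complex matrix. -/
def frobNorm {s : ℕ} (A : Matrix (Fin s) (Fin s) ℂ) : ℝ :=
  Real.sqrt (∑ i : Fin s, ∑ j : Fin s, ‖A i j‖ ^ 2)

end

noncomputable section AuxProofs

open ContinuousLinearMap MeasureTheory

section MulPositive

variable {H : Type*} [NormedAddCommGroup H] [InnerProductSpace ℂ H] [CompleteSpace H]

private lemma re_inner_self {x : H} : (inner ℂ x x : ℂ).re = ‖x‖ ^ 2 := by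
  simpa using inner_self_eq_norm_sq (𝕜 := ℂ) x

private lemma aux_conj_pos {A B : H →L[ℂ] H} (hA : A.IsPositive) (hB : IsSelfAdjoint B) :
    (B * (A * B)).IsPositive := by
  have h := hA.adjoint_conj B
  rwa [hB.adjoint_eq] at h

set_option maxHeartbeats 1000000 in
private lemma aux_re_mul_nonneg {T S : H →L[ℂ] H} (hT : T.IsPositive) (hS : S.IsPositive)
    (hc : T * S = S * T) (hT1 : (1 - T).IsPositive) (x : H) :
    0 ≤ Complex.re (inner ℂ ((T * S) x) x : ℂ) := by
  set A : ℕ → H →L[ℂ] H := fun n => Nat.recAux T (fun _ B => B - B * B) n with hAdef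
  have hAsucc : ∀ n, A (n + 1) = A n - A n * A n := fun n => rfl
  have key : ∀ n, (A n).IsPositive ∧ (1 - A n).IsPositive ∧ A n * S = S * A n ∧
      ((T - A n) * S).IsPositive := by
    intro n
    induction n with
    | zero =>
      refine ⟨hT, hT1, hc, ?_⟩
      have e : (T - A 0) * S = 0 := by
        show (T - T) * S = 0
        rw [sub_self, zero_mul]
      rw [e]
      exact isPositive_zero
    | succ n ih =>
      obtain ⟨h1, h2, h3, h4⟩ := ih
      have hBsa : IsSelfAdjoint (A n) := h1.isSelfAdjoint
      have h1Bsa : IsSelfAdjoint (1 - A n) := h2.isSelfAdjoint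
      have hpos1 : (A n * ((1 - A n) * A n)).IsPositive := aux_conj_pos h2 hBsa
      have hpos2 : ((1 - A n) * (A n * (1 - A n))).IsPositive := aux_conj_pos h1 h1Bsa
      have hBBpos : (A n * ((1 : H →L[ℂ] H) * A n)).IsPositive :=
        aux_conj_pos isPositive_one hBsa
      refine ⟨?_, ?_, ?_, ?_⟩
      · have e : A (n + 1) = A n * ((1 - A n) * A n) + (1 - A n) * (A n * (1 - A n)) := by
          rw [hAsucc]; noncomm_ring
        rw [e]; exact hpos1.add hpos2
      · have e : 1 - A (n + 1) = (1 - A n) + A n * ((1 : H →L[ℂ] H) * A n) := by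
          rw [hAsucc]; noncomm_ring
        rw [e]; exact h2.add hBBpos
      · rw [hAsucc, sub_mul, mul_sub, h3, mul_assoc, h3, ← mul_assoc, h3, mul_assoc]
      · have hpos3 : (A n * (S * A n)).IsPositive := aux_conj_pos hS hBsa
        have h5 : A n * (S * A n) = A n * A n * S := by
          rw [← h3, ← mul_assoc]
        have e : (T - A (n + 1)) * S = (T - A n) * S + A n * (S * A n) := by
          rw [h5, hAsucc]; noncomm_ring
        rw [e]; exact h4.add hpos3
  -- quantitative part
  set a : ℕ → ℝ := fun n => Complex.re (inner ℂ ((A n) x) x : ℂ) with hadef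
  have hA_sa : ∀ n, IsSelfAdjoint (A n) := fun n => (key n).1.isSelfAdjoint
  have ha_nonneg : ∀ n, 0 ≤ a n := fun n => (key n).1.2 x
  have hnorm_sq : ∀ n, ‖(A n) x‖ ^ 2 = a n - a (n + 1) := by
    intro n
    have h1 : (inner ℂ ((ContinuousLinearMap.adjoint (A n)) ((A n) x)) x : ℂ) =
        inner ℂ ((A n) x) ((A n) x) := ContinuousLinearMap.adjoint_inner_left _ _ _
    rw [(hA_sa n).adjoint_eq] at h1
    have h2 : A n * A n = A n - A (n + 1) := by
      rw [hAsucc]; exact (sub_sub_cancel _ _).symm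
    have h3 : (inner ℂ ((A n) ((A n) x)) x : ℂ) = inner ℂ ((A n) x) x - inner ℂ ((A (n + 1)) x) x := by
      have e : (A n) ((A n) x) = (A n) x - (A (n + 1)) x := by
        have e2 : (A n * A n) x = (A n - A (n + 1)) x := by rw [h2]
        simpa [ContinuousLinearMap.mul_apply, ContinuousLinearMap.sub_apply] using e2
      rw [e, inner_sub_left]
    have h4 := congrArg Complex.re (h1.symm.trans h3)
    rw [Complex.sub_re] at h4
    rw [← re_inner_self (x := (A n) x), h4]
  have hsummable : Summable fun n => ‖(A n) x‖ ^ 2 := by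
    apply summable_of_sum_range_le (c := a 0) (fun n => by positivity)
    intro N
    have : ∑ n ∈ Finset.range N, ‖(A n) x‖ ^ 2 = a 0 - a N := by
      calc ∑ n ∈ Finset.range N, ‖(A n) x‖ ^ 2
          = ∑ n ∈ Finset.range N, (a n - a (n + 1)) :=
            Finset.sum_congr rfl fun n _ => hnorm_sq n
        _ = a 0 - a N := Finset.sum_range_sub' a N
    rw [this]
    linarith [ha_nonneg N]
  have hto0 : Tendsto (fun n => ‖(A n) x‖) atTop (nhds 0) := by
    have h := hsummable.tendsto_atTop_zero
    have h2 := (Real.continuous_sqrt.tendsto 0).comp h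
    simp only [Function.comp_def, Real.sqrt_zero] at h2
    convert h2 using 2 with n
    rw [Real.sqrt_sq (norm_nonneg _)]
  have hineq : ∀ n, -(‖S x‖ * ‖(A n) x‖) ≤ Complex.re (inner ℂ ((T * S) x) x : ℂ) := by
    intro n
    have hsplit : T * S = (T - A n) * S + A n * S := by noncomm_ring
    have e1 : Complex.re (inner ℂ ((T * S) x) x : ℂ) =
        Complex.re (inner ℂ (((T - A n) * S) x) x : ℂ) +
          Complex.re (inner ℂ ((A n * S) x) x : ℂ) := by
      rw [hsplit]
      rw [ContinuousLinearMap.add_apply, inner_add_left, Complex.add_re]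
    have e2 : (0 : ℝ) ≤ Complex.re (inner ℂ (((T - A n) * S) x) x : ℂ) := (key n).2.2.2.2 x
    have e3 : (inner ℂ ((A n * S) x) x : ℂ) = inner ℂ (S x) ((A n) x) := by
      have h : (inner ℂ ((ContinuousLinearMap.adjoint (A n)) (S x)) x : ℂ) =
          inner ℂ (S x) ((A n) x) := ContinuousLinearMap.adjoint_inner_left _ _ _
      rw [(hA_sa n).adjoint_eq] at h
      exact h
    have e4 : |Complex.re (inner ℂ (S x) ((A n) x) : ℂ)| ≤ ‖S x‖ * ‖(A n) x‖ := by
      refine (Complex.abs_re_le_norm _).trans ?_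
      exact norm_inner_le_norm _ _
    rw [e1, e3]
    have := neg_abs_le (Complex.re (inner ℂ (S x) ((A n) x) : ℂ))
    linarith
  have hlim : Tendsto (fun n => -(‖S x‖ * ‖(A n) x‖)) atTop (nhds 0) := by
    have := (tendsto_const_nhds (x := ‖S x‖) (f := atTop (α := ℕ))).mul hto0
    rw [mul_zero] at this
    simpa using this.neg
  exact le_of_tendsto' hlim hineq

set_option maxHeartbeats 1000000 in
private lemma aux_mul_isPositive {T S : H →L[ℂ] H} (hT : T.IsPositive) (hS : S.IsPositive)
    (hc : T * S = S * T) : (T * S).IsPositive := by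
  have hsa : IsSelfAdjoint (T * S) := by
    rw [isSelfAdjoint_iff, star_mul, hS.isSelfAdjoint.star_eq, hT.isSelfAdjoint.star_eq]
    exact hc.symm
  refine isPositive_def'.mpr ⟨hsa, fun x => ?_⟩
  set c : ℝ := (‖T‖ + 1)⁻¹ with hcdef
  have hc0 : 0 < c := by positivity
  have hre_smul : ∀ (U : H →L[ℂ] H) (y z : H),
      Complex.re (inner ℂ (((c : ℂ) • U) y) z : ℂ) = c * Complex.re (inner ℂ (U y) z : ℂ) := by
    intro U y z
    rw [ContinuousLinearMap.smul_apply, inner_smul_left, Complex.conj_ofReal]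
    simp [Complex.mul_re]
  have hT'pos : (((c : ℂ) • T)).IsPositive := by
    refine isPositive_def'.mpr ⟨?_, ?_⟩
    · rw [isSelfAdjoint_iff, star_smul, hT.isSelfAdjoint.star_eq]
      norm_num
    · intro y
      have : ((c : ℂ) • T).reApplyInnerSelf y = c * Complex.re (inner ℂ (T y) y : ℂ) :=
        hre_smul T y y
      rw [ContinuousLinearMap.reApplyInnerSelf] at this
      rw [ContinuousLinearMap.reApplyInnerSelf, this]
      exact mul_nonneg hc0.le (hT.2 y)
  have h1T' : ((1 : H →L[ℂ] H) - (c : ℂ) • T).IsPositive := by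
    refine isPositive_def'.mpr ⟨?_, ?_⟩
    · exact (IsSelfAdjoint.one _).sub hT'pos.isSelfAdjoint
    · intro y
      have hb : Complex.re (inner ℂ (T y) y : ℂ) ≤ ‖T‖ * ‖y‖ ^ 2 := by
        calc Complex.re (inner ℂ (T y) y : ℂ) ≤ |Complex.re (inner ℂ (T y) y : ℂ)| := le_abs_self _
          _ ≤ ‖(inner ℂ (T y) y : ℂ)‖ := Complex.abs_re_le_norm _
          _ ≤ ‖T y‖ * ‖y‖ := norm_inner_le_norm _ _
          _ ≤ ‖T‖ * ‖y‖ * ‖y‖ :=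
              mul_le_mul_of_nonneg_right (T.le_opNorm y) (norm_nonneg _)
          _ = ‖T‖ * ‖y‖ ^ 2 := by ring
      have hnorm : (0 : ℝ) ≤ ‖T‖ := norm_nonneg _
      have hineq : c * Complex.re (inner ℂ (T y) y : ℂ) ≤ ‖y‖ ^ 2 := by
        have h1 : c * Complex.re (inner ℂ (T y) y : ℂ) ≤ c * (‖T‖ * ‖y‖ ^ 2) :=
          mul_le_mul_of_nonneg_left hb hc0.le
        have h2 : c * (‖T‖ * ‖y‖ ^ 2) ≤ ‖y‖ ^ 2 := by
          rw [hcdef]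
          rw [inv_mul_le_iff₀ (by positivity)]
          nlinarith [sq_nonneg ‖y‖]
        linarith
      show 0 ≤ Complex.re (inner ℂ ((((1 : H →L[ℂ] H) - (c : ℂ) • T)) y) y : ℂ)
      rw [ContinuousLinearMap.sub_apply, inner_sub_left, Complex.sub_re, hre_smul,
        ContinuousLinearMap.one_apply, re_inner_self]
      linarith
  have hc' : ((c : ℂ) • T) * S = S * ((c : ℂ) • T) := by
    rw [smul_mul_assoc, hc, mul_smul_comm]
  have h0 := aux_re_mul_nonneg hT'pos hS hc' h1T' x
  have heq : Complex.re (inner ℂ ((((c : ℂ) • T) * S) x) x : ℂ) =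
      c * Complex.re (inner ℂ ((T * S) x) x : ℂ) := by
    rw [smul_mul_assoc]
    exact hre_smul (T * S) x x
  rw [heq] at h0
  show 0 ≤ Complex.re (inner ℂ ((T * S) x) x : ℂ)
  nlinarith

end MulPositive

section MatInnerRep

variable {G : Type*} [MeasurableSpace G] {μ : Measure G} {s r : ℕ}

/-- Extraction of the `i`-th row as a continuous linear map on Euclidean spaces. -/
def rowCLM (s r : ℕ) (i : Fin s) :
    EuclideanSpace ℂ (Fin s × Fin r) →L[ℂ] EuclideanSpace ℂ (Fin r) :=
  LinearMap.toContinuousLinearMap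
    { toFun := fun x => WithLp.toLp 2 (fun n => x (i, n))
      map_add' := fun _ _ => rfl
      map_smul' := fun _ _ => rfl }

@[simp] lemma rowCLM_apply (i : Fin s) (v : EuclideanSpace ℂ (Fin s × Fin r)) (n : Fin r) :
    rowCLM s r i v n = v (i, n) := rfl

/-- Extraction of the `i`-th row, as an operator on `L²`. -/
def rowL (μ : Measure G) (i : Fin s) :
    MatL2 μ s r →L[ℂ] Lp (EuclideanSpace ℂ (Fin r)) 2 μ :=
  (rowCLM s r i).compLpL 2 μ

lemma matInner_eq (f g : MatL2 μ s r) (i j : Fin s) :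
    matInner f g i j = inner (𝕜 := ℂ) (rowL μ j g) (rowL μ i f) := by
  rw [MeasureTheory.L2.inner_def]
  have hf : (rowL μ i f : G → EuclideanSpace ℂ (Fin r)) =ᵐ[μ]
      fun x => rowCLM s r i (f x) := ContinuousLinearMap.coeFn_compLpL _ _
  have hg : (rowL μ j g : G → EuclideanSpace ℂ (Fin r)) =ᵐ[μ]
      fun x => rowCLM s r j (g x) := ContinuousLinearMap.coeFn_compLpL _ _
  show (∫ x, ∑ n : Fin r, f x (i, n) * (starRingEnd ℂ) (g x (j, n)) ∂μ) = _
  refine (integral_congr_ae ?_)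
  filter_upwards [hf, hg] with x hfx hgx
  rw [hfx, hgx]
  rw [PiLp.inner_apply]
  refine Finset.sum_congr rfl fun n _ => ?_
  rw [RCLike.inner_apply, rowCLM_apply, rowCLM_apply]

lemma matInner_add_left (f g h : MatL2 μ s r) :
    matInner (f + g) h = matInner f h + matInner g h := by
  ext i j
  simp only [matInner_eq, Matrix.add_apply, map_add, inner_add_right]

lemma matInner_add_right (f g h : MatL2 μ s r) :
    matInner f (g + h) = matInner f g + matInner f h := by
  ext i j
  simp only [matInner_eq, Matrix.add_apply, map_add, inner_add_left]

end MatInnerRep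

end AuxProofs

theorem stmt_6 {G : Type*} [MeasurableSpace G] [TopologicalSpace G] [BorelSpace G]
    [AddCommGroup G] [IsTopologicalAddGroup G] [LocallyCompactSpace G]
    [SigmaCompactSpace G] [TopologicalSpace.MetrizableSpace G]
    (μ : MeasureTheory.Measure G) [μ.IsAddHaarMeasure] (s r : ℕ) (hs : 0 < s) (hr : 0 < r)
    (T S : MatL2 μ s r →L[ℂ] MatL2 μ s r)
    (hTpos : T.IsPositive) (hTadj : MatAdjointable T)
    (hSpos : S.IsPositive) (hSadj : MatAdjointable S)
    (hcomm : T * S = S * T)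
    (E : ℕ → MatL2 μ s r) (hE : IsMatONB E) :
    IsMatRieszBasis (fun k => (1 + T * S) (E k)) := by
  refine ⟨E, 1 + T * S, hE, ?_, ?_, fun k => rfl⟩
  · -- bijectivity
    have hpos : (T * S).IsPositive := aux_mul_isPositive hTpos hSpos hcomm
    rw [← ContinuousLinearMap.isUnit_iff_bijective]
    refine ContinuousLinearMap.isUnit_of_forall_le_norm_inner_map _ (c := 1) one_pos fun x => ?_
    have h1 : Complex.re (inner ℂ (((1 + T * S)) x) x : ℂ) =
        ‖x‖ ^ 2 + Complex.re (inner ℂ ((T * S) x) x : ℂ) := by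
      rw [ContinuousLinearMap.add_apply, inner_add_left, Complex.add_re,
        ContinuousLinearMap.one_apply, re_inner_self]
    have h2 : (0 : ℝ) ≤ Complex.re (inner ℂ ((T * S) x) x : ℂ) := hpos.2 x
    have h3 : Complex.re (inner ℂ (((1 + T * S)) x) x : ℂ) ≤
        ‖(inner ℂ (((1 + T * S)) x) x : ℂ)‖ :=
      (le_abs_self _).trans (Complex.abs_re_le_norm _)
    simp only [NNReal.coe_one, mul_one]
    calc (‖x‖ : ℝ) ^ 2 ≤ ‖x‖ ^ 2 + Complex.re (inner ℂ ((T * S) x) x : ℂ) := by linarith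
      _ = Complex.re (inner ℂ (((1 + T * S)) x) x : ℂ) := h1.symm
      _ ≤ ‖(inner ℂ (((1 + T * S)) x) x : ℂ)‖ := h3
  · -- adjointability w.r.t. the matrix-valued inner product
    intro f g
    have hV : (1 + T * S) f = f + T (S f) := rfl
    have hA : ContinuousLinearMap.adjoint (1 + T * S) g =
        g + ContinuousLinearMap.adjoint S (ContinuousLinearMap.adjoint T g) := by
      have : ContinuousLinearMap.adjoint (1 + T * S) =
          1 + ContinuousLinearMap.adjoint S * ContinuousLinearMap.adjoint T := by
        rw [map_add, ContinuousLinearMap.mul_def, ContinuousLinearMap.adjoint_comp]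
        congr 1
        · rw [ContinuousLinearMap.one_def, ContinuousLinearMap.adjoint_id]
      rw [this]
      rfl
    rw [hV, hA, matInner_add_left, matInner_add_right, hTadj, hSadj]
end

section
/- Let T be a bounded, linear, positive operator on L²(G, ℂ^{s×r}) that is adjointable with respect to the matrix-valued inner product, and let W be a bounded, linear, positive operator on L²(G, ℂ^{s×r}) with W ∘ W = T (i.e., W is the positive square root T^{1/2} of T). Then W is adjointable with respect to the matrix-valued inner product: ⟨W f, g⟩ = ⟨f, W* g⟩ as s×s matrices for all f, g ∈ L²(G, ℂ^{s×r}). -/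
open MeasureTheory Filter
open scoped ENNReal ComplexOrder

open StarAlgebra in
private lemma aux_commute_cfcHom {A : Type*} [CStarAlgebra A] {t b : A} (ht : IsSelfAdjoint t)
    (hbt : Commute b t) (f : C(spectrum ℝ t, ℝ)) : Commute b (cfcHom ht f) := by
  let S : Subalgebra ℝ C(spectrum ℝ t, ℝ) :=
  { carrier := {g | Commute b (cfcHom ht g)}
    mul_mem' := fun {x y} hx hy => by
      simpa only [Set.mem_setOf_eq, map_mul] using Commute.mul_right hx hy
    add_mem' := fun {x y} hx hy => by
      simpa only [Set.mem_setOf_eq, map_add] using Commute.add_right hx hy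
    one_mem' := by simpa only [Set.mem_setOf_eq, map_one] using Commute.one_right b
    zero_mem' := by simpa only [Set.mem_setOf_eq, map_zero] using Commute.zero_right b
    algebraMap_mem' := fun r => by
      show Commute b (cfcHom ht (algebraMap ℝ _ r))
      rw [AlgHomClass.commutes]
      exact (Algebra.commutes r b).symm }
  have hXmem : (Polynomial.toContinuousMapOnAlgHom (spectrum ℝ t)) Polynomial.X ∈ S := by
    have h1 : (Polynomial.toContinuousMapOnAlgHom (spectrum ℝ t)) Polynomial.X
        = (ContinuousMap.id ℝ).restrict (spectrum ℝ t) := by ext x; simp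
    show Commute b _
    rw [h1, cfcHom_id ht]
    exact hbt
  have hle : polynomialFunctions (spectrum ℝ t) ≤ S := by
    rw [polynomialFunctions.eq_adjoin_X]
    exact Algebra.adjoin_le (by simpa using hXmem)
  have hc : Continuous (cfcHom ht (R := ℝ)) := (cfcHom_isClosedEmbedding ht).continuous
  have hclosed : IsClosed (S : Set C(spectrum ℝ t, ℝ)) := by
    have h2 : (S : Set C(spectrum ℝ t, ℝ))
        = (fun g => b * cfcHom ht g - cfcHom ht g * b) ⁻¹' {0} := by
      ext g
      simp only [SetLike.mem_coe, Set.mem_preimage, Set.mem_singleton_iff, sub_eq_zero]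
      exact Iff.rfl
    rw [h2]
    exact isClosed_singleton.preimage ((continuous_const.mul hc).sub (hc.mul continuous_const))
  have h3 : (polynomialFunctions (spectrum ℝ t)).topologicalClosure ≤ S :=
    Subalgebra.topologicalClosure_minimal hle hclosed
  exact h3 (by rw [polynomialFunctions.topologicalClosure]; trivial)

private lemma aux_commute_cfc {A : Type*} [CStarAlgebra A] {t b : A}
    (hbt : Commute b t) (f : ℝ → ℝ) : Commute b (cfc f t) :=
  cfc_cases (fun x => Commute b x) t f (Commute.zero_right b)
    (fun _ hsa => aux_commute_cfcHom hsa hbt _)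

private lemma aux_commute_sqrt {A : Type*} [CStarAlgebra A] [PartialOrder A] [StarOrderedRing A]
    {t b : A} (ht : 0 ≤ t) (hbt : Commute b t) : Commute b (CFC.sqrt t) := by
  rw [CFC.sqrt_eq_cfc, cfc_nnreal_eq_real _ _ ht]
  exact aux_commute_cfc hbt _

private lemma aux_sqrt_comm {H : Type*} [NormedAddCommGroup H] [InnerProductSpace ℂ H]
    [CompleteSpace H] (T W M : H →L[ℂ] H) (hT : 0 ≤ T) (hW : 0 ≤ W) (hWW : W * W = T)
    (hM : Commute M T) : Commute M W := by
  have hsqrt : CFC.sqrt T = W := CFC.sqrt_unique hWW hW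
  exact hsqrt ▸ aux_commute_sqrt hT hM

private lemma aux_matMulCLM_apply {s r : ℕ} (A : Matrix (Fin s) (Fin s) ℂ)
    (v : EuclideanSpace ℂ (Fin s × Fin r)) (p : Fin s × Fin r) :
    matMulCLM s r A v p = ∑ b : Fin s, A p.1 b * v (b, p.2) := by
  simp only [matMulCLM, LinearMap.coe_toContinuousLinearMap', Matrix.toEuclideanLin_apply,
    Matrix.mulVec, dotProduct, Matrix.of_apply]
  rw [Fintype.sum_prod_type]
  simp [Finset.sum_ite_eq]

private lemma aux_matInner_eq_inner {G : Type*} [MeasurableSpace G] {μ : Measure G} {s r : ℕ}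
    (f g : MatL2 μ s r) (i j : Fin s) :
    matInner f g i j = inner (𝕜 := ℂ) (matSMul (Matrix.single i j 1) g) f := by
  rw [MeasureTheory.L2.inner_def]
  show (∫ x, ∑ n : Fin r, f x (i, n) * (starRingEnd ℂ) (g x (j, n)) ∂μ) = _
  have hcoe : ∀ᵐ x ∂μ, (matSMul (Matrix.single i j 1) g : MatL2 μ s r) x
      = matMulCLM s r (Matrix.single i j 1) (g x) :=
    ContinuousLinearMap.coeFn_compLp _ _
  refine MeasureTheory.integral_congr_ae ?_
  filter_upwards [hcoe] with x hx
  rw [hx]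
  rw [PiLp.inner_apply]
  rw [Fintype.sum_prod_type]
  simp only [aux_matMulCLM_apply, Matrix.single, Matrix.of_apply, RCLike.inner_apply]
  simp only [ite_mul, one_mul, zero_mul, Finset.sum_ite_eq]
  rw [Finset.sum_comm]
  refine Finset.sum_congr rfl fun n _ => ?_
  simp [ite_and, Finset.sum_ite_eq, apply_ite (starRingEnd ℂ), mul_comm]


set_option maxHeartbeats 1000000 in
set_option synthInstance.maxHeartbeats 400000 in
theorem stmt_9 {G : Type*} [MeasurableSpace G] [TopologicalSpace G] [BorelSpace G]
    [AddCommGroup G] [IsTopologicalAddGroup G] [LocallyCompactSpace G]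
    [SigmaCompactSpace G] [TopologicalSpace.MetrizableSpace G]
    (μ : MeasureTheory.Measure G) [μ.IsAddHaarMeasure] (s r : ℕ) (hs : 0 < s) (hr : 0 < r)
    (T W : MatL2 μ s r →L[ℂ] MatL2 μ s r)
    (hTpos : T.IsPositive) (hTadj : MatAdjointable T)
    (hWpos : W.IsPositive) (hWT : W.comp W = T) :
    MatAdjointable W := by
  have hWsa : ContinuousLinearMap.adjoint W = W := by
    rw [← ContinuousLinearMap.star_eq_adjoint]; exact hWpos.isSelfAdjoint
  have hTsa : ContinuousLinearMap.adjoint T = T := by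
    rw [← ContinuousLinearMap.star_eq_adjoint]; exact hTpos.isSelfAdjoint
  set Mop : Fin s → Fin s → (MatL2 μ s r →L[ℂ] MatL2 μ s r) := fun i j =>
    (matMulCLM s r (Matrix.single i j 1)).compLpL 2 μ with hMop
  have key : ∀ (i j : Fin s) (f g : MatL2 μ s r),
      matInner f g i j = inner (𝕜 := ℂ) (Mop i j g) f := fun i j f g => by
    rw [aux_matInner_eq_inner]; rfl
  have hcommT : ∀ i j, Commute (Mop i j) T := by
    intro i j
    have h1 : ∀ g, T (Mop i j g) = Mop i j (T g) := by
      intro g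
      apply ext_inner_right ℂ
      intro f
      have h3 : matInner (T f) g i j = matInner f (T g) i j := by
        rw [hTadj f g, hTsa]
      rw [key, key] at h3
      calc inner (𝕜 := ℂ) (T (Mop i j g)) f
          = inner (𝕜 := ℂ) (ContinuousLinearMap.adjoint T (Mop i j g)) f := by rw [hTsa]
        _ = inner (𝕜 := ℂ) (Mop i j g) (T f) :=
            ContinuousLinearMap.adjoint_inner_left _ _ _
        _ = inner (𝕜 := ℂ) (Mop i j (T g)) f := h3
    exact ContinuousLinearMap.ext fun g => by
      simp only [ContinuousLinearMap.mul_apply]; exact (h1 g).symm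
  have hTnn : (0 : MatL2 μ s r →L[ℂ] MatL2 μ s r) ≤ T :=
    (ContinuousLinearMap.nonneg_iff_isPositive T).mpr hTpos
  have hWnn : (0 : MatL2 μ s r →L[ℂ] MatL2 μ s r) ≤ W :=
    (ContinuousLinearMap.nonneg_iff_isPositive W).mpr hWpos
  have hWW : W * W = T := hWT
  have hcommW : ∀ i j, Commute (Mop i j) W := fun i j =>
    aux_sqrt_comm T W _ hTnn hWnn hWW (hcommT i j)
  intro f g
  rw [hWsa]
  ext i j
  rw [key, key]
  have h5 : (Mop i j) (W g) = W ((Mop i j) g) := by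
    have := DFunLike.congr_fun (hcommW i j) g
    simpa using this
  calc inner (𝕜 := ℂ) (Mop i j g) (W f)
      = inner (𝕜 := ℂ) (ContinuousLinearMap.adjoint W (Mop i j g)) f :=
        (ContinuousLinearMap.adjoint_inner_left _ _ _).symm
    _ = inner (𝕜 := ℂ) (W (Mop i j g)) f := by rw [hWsa]
    _ = inner (𝕜 := ℂ) (Mop i j (W g)) f := by rw [h5]
end

section
/- Let T be a bounded, linear, bijective, positive operator on L²(G, ℂ^{s×r}) that is adjointable with respect to the matrix-valued inner product, let W be a bounded, linear, positive operator on L²(G, ℂ^{s×r}) with W ∘ W = T (the positive square root T^{1/2}), and let {E_k}_{k∈ℕ} be a matrix-valued orthonormal basis for L²(G, ℂ^{s×r}). Then {T E_k}_{k∈ℕ} is a matrix-valued Riesz basis for L²(G, ℂ^{s×r}) if and only if {W E_k}_{k∈ℕ} is a matrix-valued Riesz basis for L²(G, ℂ^{s×r}). -/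
open MeasureTheory Filter
open scoped ENNReal ComplexOrder

noncomputable section AuxProofs

open ContinuousLinearMap

private lemma commute_cfcHom' {A : Type*} [CStarAlgebra A]
    {a b : A} (ha : IsSelfAdjoint a) (hab : Commute b a)
    (f : C(spectrum ℝ a, ℝ)) : Commute b (cfcHom ha f) := by
  have hcs : IsClosed {x : A | Commute b x} := by
    have : {x : A | Commute b x} = (fun x => b * x - x * b) ⁻¹' {0} := by
      ext x; simp [Commute, SemiconjBy, sub_eq_zero]
    rw [this]
    exact isClosed_singleton.preimage (by continuity)
  let S : Subalgebra ℝ C(spectrum ℝ a, ℝ) :=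
    (Subalgebra.centralizer ℝ {b}).comap (cfcHom ha (R := ℝ)).toAlgHom
  have hSmem : ∀ g : C(spectrum ℝ a, ℝ), g ∈ S ↔ Commute b (cfcHom ha g) := by
    intro g
    have key : ((cfcHom ha (R := ℝ)).toAlgHom g : A) = cfcHom ha g := rfl
    simp only [S, Subalgebra.mem_comap, Subalgebra.mem_centralizer_iff,
      Set.mem_singleton_iff, forall_eq, key]
    exact ⟨fun h => h, fun h => h⟩
  have hSclosed : IsClosed (S : Set C(spectrum ℝ a, ℝ)) := by
    have : (S : Set C(spectrum ℝ a, ℝ)) = (cfcHom ha (R := ℝ)) ⁻¹' {x | Commute b x} := by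
      ext g; simpa using hSmem g
    rw [this]
    exact hcs.preimage (cfcHom_isClosedEmbedding ha).continuous
  have hsep : S.SeparatesPoints := by
    intro x y hxy
    refine ⟨_, ⟨(ContinuousMap.restrict (spectrum ℝ a) (.id ℝ)), ?_, rfl⟩, ?_⟩
    · exact (hSmem _).mpr (by rw [cfcHom_id ha]; exact hab)
    · simpa [ContinuousMap.restrict] using fun h => hxy (Subtype.ext h)
  have htop : S.topologicalClosure = ⊤ :=
    ContinuousMap.subalgebra_topologicalClosure_eq_top_of_separatesPoints S hsep
  have hf : f ∈ S := by
    have h1 : f ∈ S.topologicalClosure := htop ▸ trivial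
    have h2 : f ∈ closure (S : Set C(spectrum ℝ a, ℝ)) := h1
    rwa [hSclosed.closure_eq] at h2
  exact (hSmem f).mp hf

private lemma commute_cfc' {A : Type*} [CStarAlgebra A]
    {a b : A} (ha : IsSelfAdjoint a) (hab : Commute b a)
    (f : ℝ → ℝ) : Commute b (cfc f a) := by
  refine cfc_cases (fun x => Commute b x) a f (Commute.zero_right b) fun hf ha' => ?_
  exact commute_cfcHom' ha' hab _

open scoped ComplexOrder in
private lemma commute_of_commute_sq {H : Type*} [NormedAddCommGroup H] [InnerProductSpace ℂ H]
    [CompleteSpace H] (T W M : H →L[ℂ] H) (hT : T.IsPositive) (hW : W.IsPositive)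
    (hWT : W * W = T) (hM : Commute M T) : Commute M W := by
  have hTsa : IsSelfAdjoint T := hT.isSelfAdjoint
  have hTnn : (0 : H →L[ℂ] H) ≤ T := (nonneg_iff_isPositive T).mpr hT
  have hWsa : IsSelfAdjoint W := hW.isSelfAdjoint
  have hsp : ∀ x ∈ spectrum ℝ T, 0 ≤ x := fun x hx => spectrum_nonneg_of_nonneg hTnn hx
  set V := cfc Real.sqrt T with hV
  have hVsa : IsSelfAdjoint V := cfc_predicate Real.sqrt T
  have hVnn : (0 : H →L[ℂ] H) ≤ V := cfc_nonneg fun x _ => Real.sqrt_nonneg x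
  have hVsq : V * V = T := by
    rw [hV, ← cfc_mul Real.sqrt Real.sqrt T]
    have : cfc (fun x => Real.sqrt x * Real.sqrt x) T = cfc (id : ℝ → ℝ) T :=
      cfc_congr fun x hx => Real.mul_self_sqrt (hsp x hx)
    rw [this, cfc_id ℝ T]
  have hWTc : Commute W T := by rw [← hWT]; exact (Commute.refl W).mul_right (Commute.refl W)
  have hWV : Commute W V := commute_cfc' hTsa hWTc Real.sqrt
  set D := W - V with hD
  have hDsa : IsSelfAdjoint D := hWsa.sub hVsa
  have hadD : adjoint D = D := hDsa
  have hsum : (W + V) * D = 0 := by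
    rw [hD, add_mul, mul_sub, mul_sub, hWT, hVsq, hWV.eq]
    abel
  have h1 : (0 : H →L[ℂ] H) ≤ D * (W * D) := (nonneg_iff_isPositive _).mpr
    (by have := hW.adjoint_conj D; rwa [hadD] at this)
  have h2 : (0 : H →L[ℂ] H) ≤ D * (V * D) := (nonneg_iff_isPositive _).mpr
    (by have := ((nonneg_iff_isPositive V).mp hVnn).adjoint_conj D; rwa [hadD] at this)
  have hPsum : D * (W * D) + D * (V * D) = 0 := by
    calc D * (W * D) + D * (V * D) = D * ((W + V) * D) := by noncomm_ring
      _ = 0 := by rw [hsum, mul_zero]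
  have hP1z : D * (W * D) = 0 :=
    le_antisymm (by calc D * (W * D) ≤ D * (W * D) + D * (V * D) := le_add_of_nonneg_right h2
                    _ = 0 := hPsum) h1
  have hP2z : D * (V * D) = 0 := by
    have := hPsum; rwa [hP1z, zero_add] at this
  have hD3 : D * (D * D) = 0 := by
    have : D * (D * D) = D * (W * D) - D * (V * D) := by rw [hD]; noncomm_ring
    rw [this, hP1z, hP2z, sub_zero]
  have hD2 : D * D = 0 := by
    have h4 : (D * D) * (D * D) = 0 := by
      calc (D * D) * (D * D) = D * (D * D) * D := by noncomm_ring
        _ = 0 := by rw [hD3, zero_mul]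
    have hnorm : ‖D * D‖ * ‖D * D‖ = 0 := by
      rw [← CStarRing.norm_star_mul_self (x := D * D)]
      rw [star_mul, hDsa.star_eq, h4, norm_zero]
    exact norm_eq_zero.mp (mul_self_eq_zero.mp hnorm)
  have hDz : D = 0 := by
    have hnorm : ‖D‖ * ‖D‖ = 0 := by
      rw [← CStarRing.norm_star_mul_self (x := D), hDsa.star_eq, hD2, norm_zero]
    exact norm_eq_zero.mp (mul_self_eq_zero.mp hnorm)
  have hWeqV : W = V := by rwa [hD, sub_eq_zero] at hDz
  rw [hWeqV]
  exact commute_cfc' hTsa hM Real.sqrt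

private lemma matMulCLM_apply' {s r : ℕ} (A : Matrix (Fin s) (Fin s) ℂ)
    (y : EuclideanSpace ℂ (Fin s × Fin r)) (i : Fin s) (n : Fin r) :
    matMulCLM s r A y (i, n) = ∑ j : Fin s, A i j * y (j, n) := by
  simp only [matMulCLM, LinearMap.coe_toContinuousLinearMap']
  rw [Matrix.toEuclideanLin_apply]
  simp only [PiLp.toLp_apply, Matrix.mulVec, dotProduct,
    Matrix.of_apply]
  rw [Fintype.sum_prod_type]
  simp [Finset.sum_comm (γ := ℂ)]

private lemma matInner_entry {G : Type*} [MeasurableSpace G] {μ : Measure G} {s r : ℕ}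
    (f g : MatL2 μ s r) (a b : Fin s) :
    matInner f g a b =
      inner (𝕜 := ℂ) (matSMul (Matrix.single a b (1:ℂ)) g) f := by
  rw [MeasureTheory.L2.inner_def]
  show (∫ x, ∑ n : Fin r, f x (a, n) * (starRingEnd ℂ) (g x (b, n)) ∂μ) = _
  refine integral_congr_ae ?_
  simp only [matSMul]
  filter_upwards [ContinuousLinearMap.coeFn_compLp
    (matMulCLM s r (Matrix.single a b (1:ℂ))) g] with x hx
  rw [hx]
  rw [PiLp.inner_apply]
  rw [Fintype.sum_prod_type]
  simp only [matMulCLM_apply', Matrix.single, Matrix.of_apply, RCLike.inner_apply]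
  rw [Finset.sum_comm]
  simp only [ite_and, boole_mul, Finset.sum_ite_eq, Finset.mem_univ, if_true,
    apply_ite (starRingEnd ℂ), map_zero, ite_mul, zero_mul]
  refine Finset.sum_congr rfl fun n _ => ?_
  rw [Finset.sum_eq_single a]
  · simp
  · intro c _ hc
    simp [(Ne.symm hc)]
  · simp

/-- The pointwise matrix action as a continuous linear operator on `MatL2`. -/
private def mOp {G : Type*} [MeasurableSpace G] (μ : Measure G) (s r : ℕ)
    (A : Matrix (Fin s) (Fin s) ℂ) : MatL2 μ s r →L[ℂ] MatL2 μ s r :=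
  (matMulCLM s r A).compLpL 2 μ

private lemma mOp_apply {G : Type*} [MeasurableSpace G] {μ : Measure G} {s r : ℕ}
    (A : Matrix (Fin s) (Fin s) ℂ) (f : MatL2 μ s r) :
    mOp μ s r A f = matSMul A f := rfl

private lemma commute_mOp_of_adjointable {G : Type*} [MeasurableSpace G] {μ : Measure G}
    {s r : ℕ} (U : MatL2 μ s r →L[ℂ] MatL2 μ s r) (hsa : ContinuousLinearMap.adjoint U = U)
    (h : MatAdjointable U) (a b : Fin s) :
    Commute (mOp μ s r (Matrix.single a b (1:ℂ))) U := by
  set M := mOp μ s r (Matrix.single a b (1:ℂ)) with hM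
  show M * U = U * M
  refine ContinuousLinearMap.ext fun g => ?_
  refine ext_inner_right ℂ fun f => ?_
  have e1 : (inner ℂ (U (M g)) f : ℂ) = inner ℂ (M g) (U f) := by
    conv_lhs => rw [← hsa]
    exact ContinuousLinearMap.adjoint_inner_left U f (M g)
  have e2 : (inner ℂ (M g) (U f) : ℂ) = matInner (U f) g a b := by
    rw [matInner_entry, mOp_apply]
  have e3 : matInner (U f) g a b = matInner f (U g) a b := by
    rw [h f g, hsa]
  have e4 : matInner f (U g) a b = inner ℂ (M (U g)) f := by
    rw [matInner_entry, mOp_apply]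
  show (inner ℂ (M (U g)) f : ℂ) = inner ℂ (U (M g)) f
  rw [e1, e2, e3, e4]

private lemma adjointable_of_commute {G : Type*} [MeasurableSpace G] {μ : Measure G}
    {s r : ℕ} (U : MatL2 μ s r →L[ℂ] MatL2 μ s r) (hsa : ContinuousLinearMap.adjoint U = U)
    (h : ∀ a b : Fin s, Commute (mOp μ s r (Matrix.single a b (1:ℂ))) U) :
    MatAdjointable U := by
  intro f g
  ext a b
  rw [matInner_entry, matInner_entry, hsa]
  have e1 : (inner ℂ (matSMul (Matrix.single a b (1:ℂ)) g) (U f) : ℂ)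
      = inner ℂ (ContinuousLinearMap.adjoint U (matSMul (Matrix.single a b (1:ℂ)) g)) f :=
    (ContinuousLinearMap.adjoint_inner_left U f _).symm
  rw [e1, hsa]
  have e2 : U (matSMul (Matrix.single a b (1:ℂ)) g)
      = matSMul (Matrix.single a b (1:ℂ)) (U g) := by
    have := (h a b).eq
    have h2 := congrArg (fun (V : MatL2 μ s r →L[ℂ] MatL2 μ s r) => V g) this
    simpa [mOp_apply] using h2.symm
  rw [e2]

end AuxProofs

theorem stmt_10 {G : Type*} [MeasurableSpace G] [TopologicalSpace G] [BorelSpace G]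
    [AddCommGroup G] [IsTopologicalAddGroup G] [LocallyCompactSpace G]
    [SigmaCompactSpace G] [TopologicalSpace.MetrizableSpace G]
    (μ : MeasureTheory.Measure G) [μ.IsAddHaarMeasure] (s r : ℕ) (hs : 0 < s) (hr : 0 < r)
    (T W : MatL2 μ s r →L[ℂ] MatL2 μ s r)
    (hTpos : T.IsPositive) (hTbij : Function.Bijective T) (hTadj : MatAdjointable T)
    (hWpos : W.IsPositive) (hWT : W.comp W = T)
    (E : ℕ → MatL2 μ s r) (hE : IsMatONB E) :
    IsMatRieszBasis (fun k => T (E k)) ↔ IsMatRieszBasis (fun k => W (E k)) := by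
  have hTsa : ContinuousLinearMap.adjoint T = T := hTpos.isSelfAdjoint.adjoint_eq
  have hWsa : ContinuousLinearMap.adjoint W = W := hWpos.isSelfAdjoint.adjoint_eq
  have hWT' : W * W = T := hWT
  -- W is bijective
  have hWinj : Function.Injective W := by
    intro x y hxy
    apply hTbij.injective
    have : T x = W (W x) := by rw [← hWT]; rfl
    rw [this, hxy]
    rw [show T y = W (W y) from by rw [← hWT]; rfl]
  have hWsurj : Function.Surjective W := by
    intro y
    obtain ⟨x, hx⟩ := hTbij.surjective y
    exact ⟨W x, by rw [← hx, ← hWT]; rfl⟩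
  -- W is adjointable
  have hWadj : MatAdjointable W := by
    apply adjointable_of_commute W hWsa
    intro a b
    exact commute_of_commute_sq T W _ hTpos hWpos hWT'
      (commute_mOp_of_adjointable T hTsa hTadj a b)
  constructor
  · intro _
    exact ⟨E, W, hE, ⟨hWinj, hWsurj⟩, hWadj, fun k => rfl⟩
  · intro _
    exact ⟨E, T, hE, hTbij, hTadj, fun k => rfl⟩
end

section
/- Let T be a bounded, linear, bijective, positive operator on L²(G, ℂ^{s×r}) that is adjointable with respect to the matrix-valued inner product, and let {E_k}_{k∈ℕ} be a matrix-valued orthonormal basis for L²(G, ℂ^{s×r}) (so that {T E_k}_{k∈ℕ} is a matrix-valued Riesz basis). Let (W_n)_{n≥0} be a sequence of bounded, linear, positive operators on L²(G, ℂ^{s×r}) with W_0 = T and W_{n+1} ∘ W_{n+1} = W_n for every n (so W_n is the iterated square root T^{1/2ⁿ}). Then for every n ∈ ℕ, the sequence {W_n E_k}_{k∈ℕ} is a matrix-valued Riesz basis for L²(G, ℂ^{s×r}). -/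
open MeasureTheory Filter
open scoped ENNReal ComplexOrder

section Aux

open MeasureTheory Matrix
open scoped NNReal

lemma aux_cfc_mem_elemental {A : Type*} [CStarAlgebra A] (f : ℂ → ℂ) (a : A) :
    cfc f a ∈ StarAlgebra.elemental ℂ a := by
  refine cfc_cases (· ∈ StarAlgebra.elemental ℂ a) a f (zero_mem _) fun hf ha => ?_
  rw [cfcHom_eq_of_isStarNormal]
  exact Subtype.coe_prop _

lemma aux_centralizer_closed {A : Type*} [CStarAlgebra A] (t : Set A) :
    IsClosed (Set.centralizer t) := by
  have : Set.centralizer t = ⋂ g ∈ t, {x : A | g * x = x * g} := by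
    ext x; simp [Set.mem_centralizer_iff, Set.mem_iInter]
  rw [this]
  exact isClosed_biInter fun g _ =>
    isClosed_eq (continuous_const.mul continuous_id) (continuous_id.mul continuous_const)

lemma aux_commute_sqrt_s13 {A : Type*} [CStarAlgebra A] [PartialOrder A] [StarOrderedRing A]
    {a b m : A} (ha : 0 ≤ a) (hb : 0 ≤ b) (hab : b * b = a) (hm : Commute m a) :
    Commute m b := by
  have hsa : IsSelfAdjoint a := .of_nonneg ha
  have hb' : b = CFC.sqrt a := (CFC.sqrt_unique hab hb).symm
  have h1 : CFC.sqrt a = cfc (fun x : ℂ => ((NNReal.sqrt x.re.toNNReal : ℝ) : ℂ)) a := by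
    rw [CFC.sqrt_eq_cfc, cfc_nnreal_eq_real NNReal.sqrt a ha, cfc_real_eq_complex _ hsa]
  have hmem : CFC.sqrt a ∈ StarAlgebra.elemental ℂ a := h1 ▸ aux_cfc_mem_elemental _ a
  have hle : StarAlgebra.elemental ℂ a ≤ StarSubalgebra.centralizer ℂ {m} := by
    apply StarAlgebra.elemental.le_of_mem
    · rw [StarSubalgebra.coe_centralizer]; exact aux_centralizer_closed _
    · rw [StarSubalgebra.mem_centralizer_iff]
      rintro g rfl
      refine ⟨hm, ?_⟩
      have := congrArg star hm.eq
      simpa [hsa.star_eq, mul_comm] using this.symm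
  have h2 := hle hmem
  rw [StarSubalgebra.mem_centralizer_iff] at h2
  exact hb' ▸ (h2 m rfl).1

lemma aux_repr {G : Type*} [MeasurableSpace G] {μ : Measure G} {s r : ℕ}
    (i j : Fin s) (f g : MatL2 μ s r) :
    matInner f g i j =
      inner (𝕜 := ℂ) g (((matMulCLM s r (Matrix.single j i 1)).compLpL 2 μ) f) := by
  rw [MeasureTheory.L2.inner_def]
  show (∫ x, ∑ n : Fin r, f x (i, n) * (starRingEnd ℂ) (g x (j, n)) ∂μ) = _
  refine integral_congr_ae ?_
  filter_upwards [ContinuousLinearMap.coeFn_compLpL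
    (matMulCLM s r (Matrix.single j i 1)) f] with x hx
  rw [hx, PiLp.inner_apply, Fintype.sum_prod_type]
  simp only [matMulCLM, LinearMap.coe_toContinuousLinearMap', Matrix.toEuclideanLin_apply,
    RCLike.inner_apply]
  have key : ∀ (a : Fin s) (n : Fin r),
      ((Matrix.of fun p q : Fin s × Fin r =>
          if p.2 = q.2 then Matrix.single j i 1 p.1 q.1 else 0) *ᵥ
          WithLp.ofLp (f x)) (a, n)
      = if a = j then f x (i, n) else 0 := by
    intro a n
    simp only [Matrix.mulVec, dotProduct, Fintype.sum_prod_type, Matrix.of_apply,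
      Matrix.single, ite_and]
    simp [Finset.sum_ite_eq, Finset.sum_ite_eq', eq_comm, ite_mul]
  simp only [key]
  simp [ite_mul, mul_ite, Finset.sum_ite_eq, Finset.sum_ite_eq', mul_comm]

end Aux

theorem stmt_13 {G : Type*} [MeasurableSpace G] [TopologicalSpace G] [BorelSpace G]
    [AddCommGroup G] [IsTopologicalAddGroup G] [LocallyCompactSpace G]
    [SigmaCompactSpace G] [TopologicalSpace.MetrizableSpace G]
    (μ : MeasureTheory.Measure G) [μ.IsAddHaarMeasure] (s r : ℕ) (hs : 0 < s) (hr : 0 < r)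
    (T : MatL2 μ s r →L[ℂ] MatL2 μ s r)
    (hTpos : T.IsPositive) (hTbij : Function.Bijective T) (hTadj : MatAdjointable T)
    (E : ℕ → MatL2 μ s r) (hE : IsMatONB E)
    (W : ℕ → MatL2 μ s r →L[ℂ] MatL2 μ s r)
    (hW0 : W 0 = T) (hWpos : ∀ n : ℕ, (W n).IsPositive)
    (hWsq : ∀ n : ℕ, (W (n + 1)).comp (W (n + 1)) = W n) :
    ∀ n : ℕ, IsMatRieszBasis (fun k => W n (E k)) := by
  classical
  set M : Fin s → Fin s → (MatL2 μ s r →L[ℂ] MatL2 μ s r) :=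
    fun i j => (matMulCLM s r (Matrix.single j i 1)).compLpL 2 μ with hMdef
  have hsaW : ∀ n, IsSelfAdjoint (W n) := fun n => (hWpos n).isSelfAdjoint
  have hadjW : ∀ n, ContinuousLinearMap.adjoint (W n) = W n := fun n => by
    rw [← ContinuousLinearMap.star_eq_adjoint]; exact hsaW n
  have hadjT : ContinuousLinearMap.adjoint T = T := by
    rw [← ContinuousLinearMap.star_eq_adjoint]; exact hTpos.isSelfAdjoint
  have hcomm : ∀ n i j, Commute (M i j) (W n) := by
    intro n
    induction n with
    | zero =>
      intro i j
      rw [hW0]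
      show M i j * T = T * M i j
      refine ContinuousLinearMap.ext fun f => ?_
      refine ext_inner_left ℂ fun g => ?_
      show inner (𝕜 := ℂ) g (M i j (T f)) = inner (𝕜 := ℂ) g (T (M i j f))
      calc inner (𝕜 := ℂ) g (M i j (T f)) = matInner (T f) g i j := (aux_repr i j (T f) g).symm
        _ = matInner f (ContinuousLinearMap.adjoint T g) i j := by rw [hTadj f g]
        _ = matInner f (T g) i j := by rw [hadjT]
        _ = inner (𝕜 := ℂ) (T g) (M i j f) := aux_repr i j f (T g)
        _ = inner (𝕜 := ℂ) (ContinuousLinearMap.adjoint T g) (M i j f) := by rw [hadjT]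
        _ = inner (𝕜 := ℂ) g (T (M i j f)) := ContinuousLinearMap.adjoint_inner_left T _ _
    | succ n ih =>
      intro i j
      refine aux_commute_sqrt_s13 (a := W n) ?_ ?_ ?_ (ih i j)
      · exact (ContinuousLinearMap.nonneg_iff_isPositive _).mpr (hWpos n)
      · exact (ContinuousLinearMap.nonneg_iff_isPositive _).mpr (hWpos (n + 1))
      · exact hWsq n
  have hadj : ∀ n, MatAdjointable (W n) := by
    intro n f g
    ext i j
    calc matInner (W n f) g i j
        = inner (𝕜 := ℂ) g (M i j (W n f)) := aux_repr i j (W n f) g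
      _ = inner (𝕜 := ℂ) g ((M i j * W n) f) := rfl
      _ = inner (𝕜 := ℂ) g ((W n * M i j) f) := by rw [(hcomm n i j).eq]
      _ = inner (𝕜 := ℂ) g (W n (M i j f)) := rfl
      _ = inner (𝕜 := ℂ) (ContinuousLinearMap.adjoint (W n) g) (M i j f) :=
          (ContinuousLinearMap.adjoint_inner_left (W n) _ _).symm
      _ = matInner f (ContinuousLinearMap.adjoint (W n) g) i j :=
          (aux_repr i j f (ContinuousLinearMap.adjoint (W n) g)).symm
  have hbij : ∀ n, Function.Bijective (W n) := by
    intro n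
    induction n with
    | zero => rw [hW0]; exact hTbij
    | succ n ih =>
      have hc : Function.Bijective (⇑(W (n + 1)) ∘ ⇑(W (n + 1))) := by
        have h : ⇑(W n) = ⇑(W (n + 1)) ∘ ⇑(W (n + 1)) := by
          rw [← hWsq n]; rfl
        rw [← h]; exact ih
      exact ⟨Function.Injective.of_comp hc.1, Function.Surjective.of_comp hc.2⟩
  intro n
  exact ⟨E, W n, hE, hbij n, hadj n, fun k => rfl⟩
end

section
/- Let T be a bounded, linear, self-adjoint operator on L²(G, ℂ^{s×r}) (self-adjoint with respect to ⟨·,·⟩_{L²}) that is adjointable with respect to the matrix-valued inner product, let Q be the positive square root of T², i.e., a bounded, linear, positive operator with Q ∘ Q = T ∘ T, and let {E_k}_{k∈ℕ} be a matrix-valued orthonormal basis for L²(G, ℂ^{s×r}). Then both {(I + ½(Q + T)) E_k}_{k∈ℕ} and {(I + ½(Q − T)) E_k}_{k∈ℕ} are matrix-valued Riesz bases for L²(G, ℂ^{s×r}), where I denotes the identity operator. -/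
open MeasureTheory Filter
open scoped ENNReal ComplexOrder

set_option maxHeartbeats 1000000
set_option synthInstance.maxHeartbeats 400000

noncomputable section StmtAux

namespace StmtAux

open MeasureTheory Filter ContinuousLinearMap
open scoped ENNReal InnerProductSpace

variable {G : Type*} [MeasurableSpace G] {μ : Measure G} {s r : ℕ}

def rowCLM (s r : ℕ) (i : Fin s) :
    EuclideanSpace ℂ (Fin s × Fin r) →L[ℂ] EuclideanSpace ℂ (Fin r) :=
  LinearMap.toContinuousLinearMap
    { toFun := fun v => (WithLp.toLp 2 (fun n => v (i, n)) : EuclideanSpace ℂ (Fin r))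
      map_add' := fun _ _ => rfl
      map_smul' := fun _ _ => rfl }

@[simp] lemma rowCLM_apply (i : Fin s) (v : EuclideanSpace ℂ (Fin s × Fin r)) (n : Fin r) :
    rowCLM s r i v n = v (i, n) := rfl

def rowProj (μ : Measure G) (s r : ℕ) (i : Fin s) :
    MatL2 μ s r →L[ℂ] Lp (EuclideanSpace ℂ (Fin r)) 2 μ :=
  (rowCLM s r i).compLpL 2 μ

lemma matInner_apply (f g : MatL2 μ s r) (i j : Fin s) :
    matInner f g i j = ⟪rowProj μ s r j g, rowProj μ s r i f⟫_ℂ := by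
  rw [MeasureTheory.L2.inner_def]
  show (∫ x, ∑ n : Fin r, f x (i, n) * (starRingEnd ℂ) (g x (j, n)) ∂μ) = _
  refine integral_congr_ae ?_
  filter_upwards [ContinuousLinearMap.coeFn_compLpL (rowCLM s r j) g,
    ContinuousLinearMap.coeFn_compLpL (rowCLM s r i) f] with x hxg hxf
  rw [show ((rowProj μ s r j g : Lp (EuclideanSpace ℂ (Fin r)) 2 μ) : G → EuclideanSpace ℂ (Fin r)) x = ((rowCLM s r j).compLpL 2 μ g : Lp (EuclideanSpace ℂ (Fin r)) 2 μ) x from rfl, hxg,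
    show ((rowProj μ s r i f : Lp (EuclideanSpace ℂ (Fin r)) 2 μ) : G → EuclideanSpace ℂ (Fin r)) x = ((rowCLM s r i).compLpL 2 μ f : Lp (EuclideanSpace ℂ (Fin r)) 2 μ) x from rfl, hxf]
  simp only [PiLp.inner_apply, RCLike.inner_apply, rowCLM_apply]

lemma matInner_conj (f g : MatL2 μ s r) (i j : Fin s) :
    matInner f g i j = (starRingEnd ℂ) (matInner g f j i) := by
  rw [matInner_apply, matInner_apply, inner_conj_symm]

lemma matInner_smul_left (c : ℂ) (f g : MatL2 μ s r) :
    matInner (c • f) g = c • matInner f g := by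
  ext i j
  simp only [matInner_apply, Matrix.smul_apply, smul_eq_mul]
  rw [(rowProj μ s r i).map_smul, inner_smul_right]

lemma matInner_smul_right (c : ℂ) (f g : MatL2 μ s r) :
    matInner f (c • g) = (starRingEnd ℂ c) • matInner f g := by
  ext i j
  simp only [matInner_apply, Matrix.smul_apply, smul_eq_mul]
  rw [(rowProj μ s r j).map_smul, inner_smul_left]

lemma matInner_add_left (f f' g : MatL2 μ s r) :
    matInner (f + f') g = matInner f g + matInner f' g := by
  ext i j
  simp only [matInner_apply, Matrix.add_apply]
  rw [(rowProj μ s r i).map_add, inner_add_right]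

lemma matInner_add_right (f g g' : MatL2 μ s r) :
    matInner f (g + g') = matInner f g + matInner f g' := by
  ext i j
  simp only [matInner_apply, Matrix.add_apply]
  rw [(rowProj μ s r j).map_add, inner_add_left]

lemma matAdj_star {U : MatL2 μ s r →L[ℂ] MatL2 μ s r} (hU : MatAdjointable U) :
    MatAdjointable (star U) := by
  intro f g
  rw [star_eq_adjoint, adjoint_adjoint]
  ext i j
  rw [matInner_conj, show matInner g (adjoint U f) = matInner (U g) f from (hU g f).symm,
    ← matInner_conj]

lemma matAdj_of_mem {T : MatL2 μ s r →L[ℂ] MatL2 μ s r}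
    (hTadj : MatAdjointable T)
    {U : MatL2 μ s r →L[ℂ] MatL2 μ s r} (hU : U ∈ StarAlgebra.elemental ℂ T) :
    MatAdjointable U := by
  induction hU using StarAlgebra.elemental.induction_on with
  | self => exact hTadj
  | star_self => exact matAdj_star hTadj
  | algebraMap c =>
    intro f g
    rw [Algebra.algebraMap_eq_smul_one]
    have hadj : adjoint (c • (1 : MatL2 μ s r →L[ℂ] MatL2 μ s r))
        = (starRingEnd ℂ c) • 1 := by
      rw [← star_eq_adjoint]; simp
    rw [hadj, ContinuousLinearMap.smul_apply, ContinuousLinearMap.one_apply, ContinuousLinearMap.smul_apply, ContinuousLinearMap.one_apply, matInner_smul_left,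
      matInner_smul_right, starRingEnd_self_apply]
  | add u hu v hv hu' hv' =>
    intro f g
    have hadj : adjoint (u + v) = adjoint u + adjoint v := map_add adjoint u v
    rw [hadj, ContinuousLinearMap.add_apply, ContinuousLinearMap.add_apply, matInner_add_left, matInner_add_right, hu' f g, hv' f g]
  | mul u hu v hv hu' hv' =>
    intro f g
    have hadj : adjoint (u * v) = adjoint v * adjoint u := by
      rw [← star_eq_adjoint, star_mul]; rfl
    rw [hadj, ContinuousLinearMap.mul_apply, ContinuousLinearMap.mul_apply, hu' (v f) g, hv' f (adjoint u g)]
  | closure sset hsub hP v hv =>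
    obtain ⟨w, hws, hwlim⟩ := mem_closure_iff_seq_limit.mp hv
    intro f g
    ext i j
    have hfa : Tendsto (fun n => w n f) atTop (nhds (v f)) :=
      ((ContinuousLinearMap.apply ℂ (MatL2 μ s r) f).continuous.tendsto v).comp hwlim
    have hga : Tendsto (fun n => adjoint (w n) g) atTop (nhds (adjoint v g)) := by
      have hstar : Tendsto (fun n => star (w n)) atTop (nhds (star v)) :=
        ((continuous_star.tendsto v).comp hwlim)
      have := ((ContinuousLinearMap.apply ℂ (MatL2 μ s r) g).continuous.tendsto (star v)).comp hstar
      simpa only [star_eq_adjoint, Function.comp_def, ContinuousLinearMap.apply_apply] using this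
    have h1 : Tendsto (fun n => matInner (w n f) g i j) atTop (nhds (matInner (v f) g i j)) := by
      simp only [matInner_apply]
      exact tendsto_const_nhds.inner (((rowProj μ s r i).continuous.tendsto _).comp hfa)
    have h2 : Tendsto (fun n => matInner f (adjoint (w n) g) i j) atTop
        (nhds (matInner f (adjoint v g) i j)) := by
      simp only [matInner_apply]
      exact (((rowProj μ s r j).continuous.tendsto _).comp hga).inner tendsto_const_nhds
    refine tendsto_nhds_unique ?_ h2
    refine h1.congr fun n => ?_
    rw [hP (w n) (hws n) f g]

lemma cfc_mem_elemental {A : Type*} [CStarAlgebra A] (a : A) [IsStarNormal a]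
    (g : ℂ → ℂ) : cfc g a ∈ StarAlgebra.elemental ℂ a := by
  refine cfc_cases (· ∈ StarAlgebra.elemental ℂ a) a g (zero_mem _) fun hg hna => ?_
  rw [cfcHom_eq_of_isStarNormal]
  exact ((continuousFunctionalCalculus a) _).2

lemma posPart_mem {A : Type*} [CStarAlgebra A] {a : A} (ha : IsSelfAdjoint a) :
    a⁺ ∈ StarAlgebra.elemental ℂ a := by
  have h1 : a⁺ = cfc (fun x : ℝ => x⁺) a := by
    rw [CFC.posPart_def, cfcₙ_eq_cfc]
  rw [h1, cfc_real_eq_complex]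
  have := ha.isStarNormal
  exact cfc_mem_elemental a _

lemma negPart_mem {A : Type*} [CStarAlgebra A] {a : A} (ha : IsSelfAdjoint a) :
    a⁻ ∈ StarAlgebra.elemental ℂ a := by
  have h1 : a⁻ = cfc (fun x : ℝ => x⁻) a := by
    rw [CFC.negPart_def, cfcₙ_eq_cfc]
  rw [h1, cfc_real_eq_complex]
  have := ha.isStarNormal
  exact cfc_mem_elemental a _

lemma isUnit_one_add_nonneg {H : Type*} [NormedAddCommGroup H] [InnerProductSpace ℂ H]
    [CompleteSpace H] {p : H →L[ℂ] H} (hp : 0 ≤ p) : IsUnit (1 + p) := by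
  have h1 : (-1 : ℝ) ∉ spectrum ℝ p := fun h => by
    have := spectrum_nonneg_of_nonneg hp h; linarith
  rw [spectrum.notMem_iff] at h1
  have h2 : algebraMap ℝ (H →L[ℂ] H) (-1) - p = -(1 + p) := by
    rw [map_neg, map_one, neg_add]; abel
  rw [h2, IsUnit.neg_iff] at h1
  exact h1

lemma bijective_of_isUnit {H : Type*} [NormedAddCommGroup H] [InnerProductSpace ℂ H]
    [CompleteSpace H] {V : H →L[ℂ] H} (h : IsUnit V) : Function.Bijective V := by
  obtain ⟨u, rfl⟩ := h
  constructor
  · intro x y hxy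
    have h1 : ((↑u⁻¹ * ↑u : H →L[ℂ] H)) x = ((↑u⁻¹ * ↑u : H →L[ℂ] H)) y := by
      simp only [ContinuousLinearMap.mul_apply, hxy]
    simpa [u.inv_mul] using h1
  · intro y
    refine ⟨(↑u⁻¹ : H →L[ℂ] H) y, ?_⟩
    have h2 := DFunLike.congr_fun u.mul_inv y
    rw [ContinuousLinearMap.mul_apply] at h2
    exact h2

end StmtAux

end StmtAux

theorem stmt_15 {G : Type*} [MeasurableSpace G] [TopologicalSpace G] [BorelSpace G]
    [AddCommGroup G] [IsTopologicalAddGroup G] [LocallyCompactSpace G]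
    [SigmaCompactSpace G] [TopologicalSpace.MetrizableSpace G]
    (μ : MeasureTheory.Measure G) [μ.IsAddHaarMeasure] (s r : ℕ) (hs : 0 < s) (hr : 0 < r)
    (T Q : MatL2 μ s r →L[ℂ] MatL2 μ s r)
    (hTsa : IsSelfAdjoint T) (hTadj : MatAdjointable T)
    (hQpos : Q.IsPositive) (hQ : Q.comp Q = T.comp T)
    (E : ℕ → MatL2 μ s r) (hE : IsMatONB E) :
    IsMatRieszBasis (fun k => (1 + (2⁻¹ : ℂ) • (Q + T)) (E k)) ∧
      IsMatRieszBasis (fun k => (1 + (2⁻¹ : ℂ) • (Q - T)) (E k)) := by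
  classical
  haveI : ContinuousFunctionalCalculus ℝ (MatL2 μ s r →L[ℂ] MatL2 μ s r) IsSelfAdjoint :=
    IsSelfAdjoint.instContinuousFunctionalCalculus
  have hQ0 : (0 : MatL2 μ s r →L[ℂ] MatL2 μ s r) ≤ Q :=
    (ContinuousLinearMap.nonneg_iff_isPositive Q).mpr hQpos
  have hQmul : Q * Q = T * T := hQ
  have hsqrtQ : CFC.sqrt (T * T) = Q := CFC.sqrt_unique hQmul hQ0
  have hPmem : T⁺ ∈ StarAlgebra.elemental ℂ T := StmtAux.posPart_mem hTsa
  have hNmem : T⁻ ∈ StarAlgebra.elemental ℂ T := StmtAux.negPart_mem hTsa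
  set P := T⁺ with hPdef
  set N := T⁻ with hNdef
  have hp : (0 : MatL2 μ s r →L[ℂ] MatL2 μ s r) ≤ P := CFC.posPart_nonneg T
  have hn : (0 : MatL2 μ s r →L[ℂ] MatL2 μ s r) ≤ N := CFC.negPart_nonneg T
  have hpn : P * N = 0 := CFC.posPart_mul_negPart T
  have hnp : N * P = 0 := CFC.negPart_mul_posPart T
  have hsub : P - N = T := CFC.posPart_sub_negPart T hTsa
  have hsq : (P + N) * (P + N) = T * T := by
    have h1 : (P + N) * (P + N) = P * P + N * N := by
      rw [add_mul, mul_add, mul_add, hpn, hnp]; abel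
    have h2 : (P - N) * (P - N) = P * P + N * N := by
      rw [sub_mul, mul_sub, mul_sub, hpn, hnp]; abel
    rw [h1, ← hsub, h2]
  have hsqrtP : CFC.sqrt (T * T) = P + N := CFC.sqrt_unique hsq (add_nonneg hp hn)
  have hQeq : Q = P + N := by rw [← hsqrtQ, hsqrtP]
  have key : ∀ x : MatL2 μ s r →L[ℂ] MatL2 μ s r, (2⁻¹ : ℂ) • (x + x) = x := fun x => by
    rw [smul_add, ← add_smul]; norm_num
  have hV1 : (1 : MatL2 μ s r →L[ℂ] MatL2 μ s r) + (2⁻¹ : ℂ) • (Q + T) = 1 + P := by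
    rw [hQeq, ← hsub, show P + N + (P - N) = P + P by abel, key]
  have hV2 : (1 : MatL2 μ s r →L[ℂ] MatL2 μ s r) + (2⁻¹ : ℂ) • (Q - T) = 1 + N := by
    rw [hQeq, ← hsub, show P + N - (P - N) = N + N by abel, key]
  have hb1 : Function.Bijective ((1 : MatL2 μ s r →L[ℂ] MatL2 μ s r) + P) :=
    StmtAux.bijective_of_isUnit (StmtAux.isUnit_one_add_nonneg hp)
  have hb2 : Function.Bijective ((1 : MatL2 μ s r →L[ℂ] MatL2 μ s r) + N) :=
    StmtAux.bijective_of_isUnit (StmtAux.isUnit_one_add_nonneg hn)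
  have ha1 : MatAdjointable ((1 : MatL2 μ s r →L[ℂ] MatL2 μ s r) + P) :=
    StmtAux.matAdj_of_mem hTadj (add_mem (one_mem _) hPmem)
  have ha2 : MatAdjointable ((1 : MatL2 μ s r →L[ℂ] MatL2 μ s r) + N) :=
    StmtAux.matAdj_of_mem hTadj (add_mem (one_mem _) hNmem)
  refine ⟨⟨E, 1 + (2⁻¹ : ℂ) • (Q + T), hE, ?_, ?_, fun k => rfl⟩,
          ⟨E, 1 + (2⁻¹ : ℂ) • (Q - T), hE, ?_, ?_, fun k => rfl⟩⟩
  · rw [hV1]; exact hb1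
  · rw [hV1]; exact ha1
  · rw [hV2]; exact hb2
  · rw [hV2]; exact ha2
end
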